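/- Cross-components of the decompositions of two distributed binary-block-encoders are orthogonal: for a pair of discrete memoryless sources (X^n, Y^n) and Boolean functions e : 𝒳^n → {0,1} and f : 𝒴^n → {0,1} with decompositions (ẽ_i) and (f̃_j), for every pair of distinct binary vectors i ≠ j in {0,1}^n one has E[ẽ_i(X^n) · f̃_j(Y^n)] = 0. -/
import Mathlib


open Finset

noncomputable section

namespace BBE

variable {𝒳 𝒴 : Type*} [Fintype 𝒳] [Fintype 𝒴] [DecidableEq 𝒳] [DecidableEq 𝒴]

/-- Expectation under the `n`-fold product of the pmf `PX` on `𝒳`. -/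
def EX {n : ℕ} (PX : 𝒳 → ℝ) (g : (Fin n → 𝒳) → ℝ) : ℝ :=
  ∑ x : Fin n → 𝒳, (∏ i, PX (x i)) * g x

/-- Joint expectation under the `n`-fold product of the joint pmf `PXY` on `𝒳 × 𝒴`. -/
def EJ {n : ℕ} (PXY : 𝒳 × 𝒴 → ℝ) (g : (Fin n → 𝒳) → (Fin n → 𝒴) → ℝ) : ℝ :=
  ∑ ω : Fin n → 𝒳 × 𝒴, (∏ i, PXY (ω i)) * g (fun i => (ω i).1) (fun i => (ω i).2)

def margX (PXY : 𝒳 × 𝒴 → ℝ) (x : 𝒳) : ℝ := ∑ y, PXY (x, y)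

def margY (PXY : 𝒳 × 𝒴 → ℝ) (y : 𝒴) : ℝ := ∑ x, PXY (x, y)

/-- The centered real-valued version `ẽ` of a Boolean function `e`. -/
def centered {n : ℕ} (PX : 𝒳 → ℝ) (e : (Fin n → 𝒳) → Bool) (x : Fin n → 𝒳) : ℝ :=
  (if e x then (1 : ℝ) else 0) - EX PX (fun x' => if e x' then (1 : ℝ) else 0)

/-- Conditional expectation `E[g(Xⁿ) | X_S = x_S]` under the product pmf. -/
def condExp {n : ℕ} (PX : 𝒳 → ℝ) (g : (Fin n → 𝒳) → ℝ) (S : Finset (Fin n))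
    (x : Fin n → 𝒳) : ℝ :=
  ∑ x' : Fin n → 𝒳,
    (∏ i, if i ∈ S then (if x' i = x i then (1 : ℝ) else 0) else PX (x' i)) * g x'

/-- The component `g_S` of the decomposition, defined recursively by
`g_S = E[g | X_S] - ∑_{T ⊂ S} g_T`. -/
def comp {n : ℕ} (PX : 𝒳 → ℝ) (g : (Fin n → 𝒳) → ℝ) (S : Finset (Fin n))
    (x : Fin n → 𝒳) : ℝ :=
  condExp PX g S x - ∑ T ∈ (S.powerset.erase S).attach, comp PX g T.1 x
termination_by S.card
decreasing_by
  obtain ⟨T, hT⟩ := T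
  simp only [Finset.mem_erase, Finset.mem_powerset] at hT
  exact Finset.card_lt_card (lt_of_le_of_ne (Finset.le_iff_subset.mpr hT.2) hT.1)

/-- Variance under the product pmf. -/
def varX {n : ℕ} (PX : 𝒳 → ℝ) (g : (Fin n → 𝒳) → ℝ) : ℝ :=
  EX PX (fun x => (g x - EX PX g) ^ 2)

/-- The set of correlations `E[h(X)·g(Y)]` over zero-mean unit-variance single-letter
functions; its supremum is the maximal correlation. -/
def corrSet (PXY : 𝒳 × 𝒴 → ℝ) : Set ℝ :=
  {r | ∃ h : 𝒳 → ℝ, ∃ g : 𝒴 → ℝ,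
    (∑ x, margX PXY x * h x) = 0 ∧ (∑ y, margY PXY y * g y) = 0 ∧
    (∑ x, margX PXY x * h x ^ 2) = 1 ∧ (∑ y, margY PXY y * g y ^ 2) = 1 ∧
    r = ∑ p : 𝒳 × 𝒴, PXY p * (h p.1 * g p.2)}


theorem condExp_congr {n : ℕ} (PX : 𝒳 → ℝ) (g : (Fin n → 𝒳) → ℝ) (S : Finset (Fin n))
    {x x' : Fin n → 𝒳} (h : ∀ i ∈ S, x i = x' i) :
    condExp PX g S x = condExp PX g S x' := by
  unfold condExp
  refine Finset.sum_congr rfl fun z _ => ?_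
  congr 1
  refine Finset.prod_congr rfl fun i _ => ?_
  by_cases hi : i ∈ S <;> simp [hi]
  rw [h i hi]

theorem comp_congr {n : ℕ} (PX : 𝒳 → ℝ) (g : (Fin n → 𝒳) → ℝ) (S : Finset (Fin n))
    {x x' : Fin n → 𝒳} (h : ∀ i ∈ S, x i = x' i) :
    comp PX g S x = comp PX g S x' := by
  rw [comp, comp]
  congr 1
  · exact condExp_congr PX g S h
  · refine Finset.sum_congr rfl fun T _ => ?_
    obtain ⟨T, hT⟩ := T
    simp only [Finset.mem_erase, Finset.mem_powerset] at hT
    exact comp_congr PX g T fun i hi => h i (hT.2 hi)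
termination_by S.card
decreasing_by
  simp only [Finset.mem_erase, Finset.mem_powerset] at hT
  exact Finset.card_lt_card (lt_of_le_of_ne (Finset.le_iff_subset.mpr hT.2) hT.1)

theorem sum_powerset_comp {n : ℕ} (PX : 𝒳 → ℝ) (g : (Fin n → 𝒳) → ℝ) (S : Finset (Fin n))
    (x : Fin n → 𝒳) :
    ∑ T ∈ S.powerset, comp PX g T x = condExp PX g S x := by
  have h1 : S.powerset = insert S (S.powerset.erase S) :=
    (Finset.insert_erase (Finset.mem_powerset_self S)).symm
  rw [h1, Finset.sum_insert (Finset.notMem_erase _ _), comp,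
    ← Finset.sum_attach (S.powerset.erase S) (fun T => comp PX g T x)]
  ring

theorem avg_condExp {n : ℕ} (PX : 𝒳 → ℝ)
    (g : (Fin n → 𝒳) → ℝ) {S : Finset (Fin n)} {k : Fin n} (hk : k ∈ S) (x : Fin n → 𝒳) :
    ∑ v, PX v * condExp PX g S (Function.update x k v) = condExp PX g (S.erase k) x := by
  unfold condExp
  simp only [Finset.mul_sum]
  rw [Finset.sum_comm]
  refine Finset.sum_congr rfl fun x' _ => ?_
  simp only [← mul_assoc]
  rw [← Finset.sum_mul]
  congr 1
  have factor : ∀ v : 𝒳,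
      (∏ i, if i ∈ S then (if x' i = Function.update x k v i then (1:ℝ) else 0) else PX (x' i))
      = (if x' k = v then (1:ℝ) else 0) *
        ∏ i ∈ Finset.univ.erase k,
          (if i ∈ S.erase k then (if x' i = x i then (1:ℝ) else 0) else PX (x' i)) := by
    intro v
    rw [← Finset.mul_prod_erase Finset.univ _ (Finset.mem_univ k)]
    congr 1
    · simp [hk]
    · refine Finset.prod_congr rfl fun i hi => ?_
      have hik : i ≠ k := (Finset.mem_erase.mp hi).1
      simp [Function.update_of_ne hik, Finset.mem_erase, hik]
  simp only [factor]
  rw [← Finset.mul_prod_erase Finset.univ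
    (fun i => if i ∈ S.erase k then (if x' i = x i then (1:ℝ) else 0) else PX (x' i))
    (Finset.mem_univ k)]
  simp only [mul_ite, mul_one, mul_zero, ite_mul, zero_mul, one_mul]
  rw [Finset.sum_ite_eq Finset.univ (x' k)]
  simp [Finset.mem_erase]

theorem avg_comp {n : ℕ} (PX : 𝒳 → ℝ) (hPX : ∑ v, PX v = 1)
    (g : (Fin n → 𝒳) → ℝ) {S : Finset (Fin n)} {k : Fin n} (hk : k ∈ S) (x : Fin n → 𝒳) :
    ∑ v, PX v * comp PX g S (Function.update x k v) = 0 := by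
  have hmain : ∑ v, PX v * comp PX g S (Function.update x k v)
      = condExp PX g (S.erase k) x
        - ∑ T ∈ S.powerset.erase S, ∑ v, PX v * comp PX g T (Function.update x k v) := by
    have hunf : ∀ v : 𝒳, PX v * comp PX g S (Function.update x k v)
        = PX v * (condExp PX g S (Function.update x k v)
          - ∑ T ∈ (S.powerset.erase S).attach, comp PX g T.1 (Function.update x k v)) :=
      fun v => by rw [comp]
    rw [Finset.sum_congr rfl fun v _ => hunf v]
    simp only [mul_sub]
    rw [Finset.sum_sub_distrib, avg_condExp PX g hk x]
    congr 1
    have ha : ∀ v : 𝒳, ∑ T ∈ (S.powerset.erase S).attach, comp PX g T.1 (Function.update x k v)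
        = ∑ T ∈ S.powerset.erase S, comp PX g T (Function.update x k v) := fun v =>
      Finset.sum_attach (S.powerset.erase S) (fun T => comp PX g T (Function.update x k v))
    simp only [ha, Finset.mul_sum]
    exact Finset.sum_comm
  rw [hmain]
  have hTval : ∀ T ∈ S.powerset.erase S,
      (∑ v, PX v * comp PX g T (Function.update x k v))
      = (if k ∈ T then 0 else comp PX g T x) := by
    intro T hT
    by_cases hkT : k ∈ T
    · simp only [hkT, if_true]
      exact avg_comp PX hPX g hkT x
    · have hcc : ∀ v : 𝒳, comp PX g T (Function.update x k v) = comp PX g T x := fun v =>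
        comp_congr PX g T fun i hi => Function.update_of_ne (fun h : i = k => hkT (h ▸ hi)) v x
      simp [hcc, ← Finset.sum_mul, hPX, hkT]
  rw [Finset.sum_congr rfl hTval, Finset.sum_ite, Finset.sum_const_zero, zero_add]
  have hfilter : (S.powerset.erase S).filter (fun T => ¬ k ∈ T) = (S.erase k).powerset := by
    ext U
    simp only [Finset.mem_filter, Finset.mem_erase, Finset.mem_powerset, Finset.subset_erase]
    constructor
    · rintro ⟨⟨-, h1⟩, h2⟩; exact ⟨h1, h2⟩
    · rintro ⟨h1, h2⟩; exact ⟨⟨fun h => h2 (h ▸ hk), h1⟩, h2⟩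
  rw [hfilter, sum_powerset_comp]
  ring
termination_by S.card
decreasing_by
  simp only [Finset.mem_erase, Finset.mem_powerset] at hT
  exact Finset.card_lt_card (lt_of_le_of_ne (Finset.le_iff_subset.mpr hT.2) hT.1)

theorem prod_split' {n : ℕ} (k : Fin n)
    (f : Fin n → ℝ) :
    ∏ i, f i = f k * ∏ j : {j : Fin n // j ≠ k}, f j := by
  rw [← Finset.mul_prod_erase Finset.univ f (Finset.mem_univ k)]
  congr 1
  exact Finset.prod_subtype (Finset.univ.erase k) (by simp) f
theorem sum_split {β : Type*} [Fintype β] {n : ℕ} (k : Fin n) (F : (Fin n → β) → ℝ) :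
    ∑ ω : Fin n → β, F ω
    = ∑ ω' : {j : Fin n // j ≠ k} → β, ∑ p : β,
        F (fun i => if h : i = k then p else ω' ⟨i, h⟩) := by
  let e : (({j : Fin n // j ≠ k} → β) × β) ≃ (Fin n → β) :=
    { toFun := fun z i => if h : i = k then z.2 else z.1 ⟨i, h⟩
      invFun := fun ω => (fun j => ω j, ω k)
      left_inv := by
        rintro ⟨ω', p⟩
        refine Prod.ext ?_ ?_
        · funext j
          simp [j.2]
        · simp
      right_inv := by
        intro ω
        funext i
        by_cases h : i = k
        · subst h; simp
        · simp [h] }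
  rw [← Equiv.sum_comp e F, Fintype.sum_prod_type]
  rfl


/-- cross-components of the decompositions of two distributed
binary-block-encoders applied to a pair of DMS's are orthogonal. -/
theorem cross_components_orthogonal
    {𝒳 𝒴 : Type*} [Fintype 𝒳] [Fintype 𝒴] [DecidableEq 𝒳] [DecidableEq 𝒴]
    {n : ℕ} (PXY : 𝒳 × 𝒴 → ℝ)
    (hnn : ∀ p, 0 ≤ PXY p) (hsum : ∑ p : 𝒳 × 𝒴, PXY p = 1)
    (e : (Fin n → 𝒳) → Bool) (f : (Fin n → 𝒴) → Bool)
    (S T : Finset (Fin n)) (hST : S ≠ T) :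
    EJ PXY (fun x y => comp (margX PXY) (centered (margX PXY) e) S x *
      comp (margY PXY) (centered (margY PXY) f) T y) = 0 := by
  have hX : Nonempty 𝒳 := by
    by_contra h
    rw [not_nonempty_iff] at h
    exact absurd hsum (by simp)
  have hY : Nonempty 𝒴 := by
    by_contra h
    rw [not_nonempty_iff] at h
    exact absurd hsum (by simp)
  obtain ⟨x0⟩ := hX
  obtain ⟨y0⟩ := hY
  have hmx : ∑ v : 𝒳, margX PXY v = 1 := by
    rw [← hsum, Fintype.sum_prod_type]; rfl
  have hmy : ∑ v : 𝒴, margY PXY v = 1 := by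
    rw [← hsum, Fintype.sum_prod_type, Finset.sum_comm]; rfl
  obtain ⟨k, hk⟩ : ∃ k, (k ∈ S ∧ k ∉ T) ∨ (k ∈ T ∧ k ∉ S) := by
    by_contra h
    push_neg at h
    exact hST (Finset.ext fun i => ⟨(h i).1, (h i).2⟩)
  set a := comp (margX PXY) (centered (margX PXY) e) S with ha
  set b := comp (margY PXY) (centered (margY PXY) f) T with hb
  unfold EJ
  rw [sum_split k]
  apply Finset.sum_eq_zero
  intro ω' _
  set x₀ : Fin n → 𝒳 := fun i => if h : i = k then x0 else (ω' ⟨i, h⟩).1 with hx₀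
  set y₀ : Fin n → 𝒴 := fun i => if h : i = k then y0 else (ω' ⟨i, h⟩).2 with hy₀
  have hxfun : ∀ p : 𝒳 × 𝒴,
      (fun i => ((if h : i = k then p else ω' ⟨i, h⟩) : 𝒳 × 𝒴).1)
        = Function.update x₀ k p.1 := by
    intro p; funext i
    by_cases h : i = k
    · subst h; simp
    · simp [Function.update_of_ne h, hx₀, h]
  have hyfun : ∀ p : 𝒳 × 𝒴,
      (fun i => ((if h : i = k then p else ω' ⟨i, h⟩) : 𝒳 × 𝒴).2)
        = Function.update y₀ k p.2 := by
    intro p; funext i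
    by_cases h : i = k
    · subst h; simp
    · simp [Function.update_of_ne h, hy₀, h]
  have hprod : ∀ p : 𝒳 × 𝒴,
      (∏ i, PXY (if h : i = k then p else ω' ⟨i, h⟩))
        = PXY p * ∏ j : {j : Fin n // j ≠ k}, PXY (ω' j) := by
    intro p
    rw [prod_split' k]
    congr 1
    · simp
    · refine Finset.prod_congr rfl fun j _ => ?_
      simp [j.2]
  simp only [hprod, hxfun, hyfun]
  set C := ∏ j : {j : Fin n // j ≠ k}, PXY (ω' j) with hC
  rcases hk with ⟨hkS, hkT⟩ | ⟨hkT, hkS⟩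
  · have hbconst : ∀ w : 𝒴, b (Function.update y₀ k w) = b y₀ := fun w =>
      comp_congr _ _ T fun i hi =>
        Function.update_of_ne (fun h : i = k => hkT (h ▸ hi)) w y₀
    have hstep : ∀ p : 𝒳 × 𝒴,
        (PXY p * C) * (a (Function.update x₀ k p.1) * b (Function.update y₀ k p.2))
          = (C * b y₀) * (margX PXY |> fun _ => PXY p * a (Function.update x₀ k p.1)) := by
      intro p; rw [hbconst]; ring
    rw [Finset.sum_congr rfl fun p _ => hstep p, ← Finset.mul_sum]
    have hz : ∑ p : 𝒳 × 𝒴, PXY p * a (Function.update x₀ k p.1) = 0 := by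
      rw [Fintype.sum_prod_type]
      have hv : ∀ v : 𝒳, ∑ w : 𝒴, PXY (v, w) * a (Function.update x₀ k v)
          = margX PXY v * a (Function.update x₀ k v) := fun v => by
        rw [← Finset.sum_mul]; rfl
      rw [Finset.sum_congr rfl fun v _ => hv v]
      exact avg_comp (margX PXY) hmx _ hkS x₀
    rw [hz, mul_zero]
  · have haconst : ∀ v : 𝒳, a (Function.update x₀ k v) = a x₀ := fun v =>
      comp_congr _ _ S fun i hi =>
        Function.update_of_ne (fun h : i = k => hkS (h ▸ hi)) v x₀
    have hstep : ∀ p : 𝒳 × 𝒴,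
        (PXY p * C) * (a (Function.update x₀ k p.1) * b (Function.update y₀ k p.2))
          = (C * a x₀) * (PXY p * b (Function.update y₀ k p.2)) := by
      intro p; rw [haconst]; ring
    rw [Finset.sum_congr rfl fun p _ => hstep p, ← Finset.mul_sum]
    have hz : ∑ p : 𝒳 × 𝒴, PXY p * b (Function.update y₀ k p.2) = 0 := by
      rw [Fintype.sum_prod_type, Finset.sum_comm]
      have hw : ∀ w : 𝒴, ∑ v : 𝒳, PXY (v, w) * b (Function.update y₀ k w)
          = margY PXY w * b (Function.update y₀ k w) := fun w => by
        rw [← Finset.sum_mul]; rfl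
      rw [Finset.sum_congr rfl fun w _ => hw w]
      exact avg_comp (margY PXY) hmy _ hkT y₀
    rw [hz, mul_zero]

end BBE
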